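/- Let G be an ordered graph on [n] and let a, b, c ∈ [n] with a < b < c. If G − a = G − b = G − c, then the interval [a,c] = {w : a ≤ w ≤ c} is homogeneous in G, i.e. all its vertices are pairwise ∼-equivalent (so [a,c] is contained in a single homogeneous block of G). -/

import Mathlib

namespace OrderedGraphs

/-- The order-preserving map `Fin (n-1) → Fin n` that skips the vertex `v`. -/
def delMap {n : ℕ} (v : Fin n) (i : Fin (n - 1)) : Fin n :=
  if h : (i : ℕ) < (v : ℕ) then ⟨i, lt_trans h v.isLt⟩
  else ⟨(i : ℕ) + 1, by have h1 := i.isLt; have h2 := v.isLt; omega⟩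

/-- `erase G v` is the ordered graph `G − v` on `[n-1]`, obtained by deleting `v` and
relabelling the remaining vertices order-preservingly. -/
def erase {n : ℕ} (G : SimpleGraph (Fin n)) (v : Fin n) : SimpleGraph (Fin (n - 1)) where
  Adj i j := G.Adj (delMap v i) (delMap v j)
  symm := ⟨fun i j h => G.adj_symm h⟩
  loopless := ⟨fun i h => G.irrefl h⟩

/-- The shadow `∂G` of a single ordered graph. -/
def shadow {n : ℕ} (G : SimpleGraph (Fin n)) : Set (SimpleGraph (Fin (n - 1))) :=
  {H | ∃ v : Fin n, H = erase G v}

/-- The shadow `∂𝒢` of a collection of ordered graphs. -/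
def shadowCol {n : ℕ} (𝒢 : Set (SimpleGraph (Fin n))) : Set (SimpleGraph (Fin (n - 1))) :=
  ⋃ G ∈ 𝒢, shadow G

/-- `x ∼ y` : the relation `Γ(x) \ {y} = Γ(y) \ {x}`. -/
def simRel {n : ℕ} (G : SimpleGraph (Fin n)) (x y : Fin n) : Prop :=
  G.neighborSet x \ {y} = G.neighborSet y \ {x}

/-- A set of consecutive vertices whose elements are pairwise `∼`-equivalent. -/
def IsHomInterval {n : ℕ} (G : SimpleGraph (Fin n)) (B : Set (Fin n)) : Prop :=
  B.OrdConnected ∧ ∀ x ∈ B, ∀ y ∈ B, simRel G x y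

/-- A homogeneous block: a maximal nonempty set of consecutive vertices whose elements are
pairwise `∼`-equivalent. -/
def IsHomBlock {n : ℕ} (G : SimpleGraph (Fin n)) (B : Set (Fin n)) : Prop :=
  B.Nonempty ∧ IsHomInterval G B ∧ ∀ C, IsHomInterval G C → B ⊆ C → B = C

open Classical in
/-- The excess `m(G) = Σ_{B : |B| ≥ 3} (|B| − 2)`, the sum over homogeneous blocks;
(truncated ℕ-subtraction makes blocks with `|B| ≤ 2` contribute `0`). -/
noncomputable def excess {n : ℕ} (G : SimpleGraph (Fin n)) : ℕ :=
  ∑ B ∈ Finset.univ.filter (fun B : Finset (Fin n) => IsHomBlock G ↑B), (B.card - 2)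

/-- Two ordered graphs have the same type. -/
def SameType {n n' : ℕ} (G : SimpleGraph (Fin n)) (G' : SimpleGraph (Fin n')) : Prop :=
  ∃ (k : ℕ) (B : Fin k → Set (Fin n)) (B' : Fin k → Set (Fin n')),
    (∀ i, IsHomBlock G (B i)) ∧ (∀ C, IsHomBlock G C → ∃ i, C = B i) ∧
    (∀ i j : Fin k, i < j → ∀ x ∈ B i, ∀ y ∈ B j, x < y) ∧
    (∀ i, IsHomBlock G' (B' i)) ∧ (∀ C, IsHomBlock G' C → ∃ i, C = B' i) ∧
    (∀ i j : Fin k, i < j → ∀ x ∈ B' i, ∀ y ∈ B' j, x < y) ∧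
    (∀ i j : Fin k, (∀ u ∈ B i, ∀ v ∈ B j, u ≠ v → G.Adj u v) ↔
            (∀ u ∈ B' i, ∀ v ∈ B' j, u ≠ v → G'.Adj u v)) ∧
    (∀ i, (B i).ncard = 1 ↔ (B' i).ncard = 1)

/-- The shadow within types `∂_τ G`. -/
def typeShadow {n : ℕ} (G : SimpleGraph (Fin n)) : Set (SimpleGraph (Fin (n - 1))) :=
  {H ∈ shadow G | SameType H G}

/-- The shadow within types `∂_τ 𝒢` of a collection. -/
def typeShadowCol {n : ℕ} (𝒢 : Set (SimpleGraph (Fin n))) : Set (SimpleGraph (Fin (n - 1))) :=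
  ⋃ G ∈ 𝒢, typeShadow G

/-- `Z^d(n) = {x ∈ ℤ^d : x_i ≥ 0, Σ_i x_i = n}`. -/
def Zdn (d n : ℕ) : Set (Fin d → ℤ) := {x | (∀ i, 0 ≤ x i) ∧ ∑ i, x i = (n : ℤ)}

/-- A line in `Z^d(n)`, determined by two coordinates `j, k`. -/
def ZLine (d n : ℕ) (j k : Fin d) : Set (Fin d → ℤ) :=
  {x ∈ Zdn d n | ∀ i, i ≠ j → i ≠ k → x i = 0}

/-- The shadow of a subset `A ⊆ Z^d(n)`. -/
def Zshadow (d n : ℕ) (A : Set (Fin d → ℤ)) : Set (Fin d → ℤ) :=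
  {x ∈ Zdn d (n - 1) | ∃ y ∈ A, ∀ i, x i ≤ y i}

/-- `phiAt G d x` : `x ∈ ℤ^d` is the image `φ(G)` of `G`, i.e. the homogeneous blocks of `G`
of size at least `2`, in increasing order, are `B_1 < ⋯ < B_d` and `x i = |B_i| − 2`. -/
def phiAt {n : ℕ} (G : SimpleGraph (Fin n)) (d : ℕ) (x : Fin d → ℤ) : Prop :=
  ∃ B : Fin d → Set (Fin n),
    (∀ i, IsHomBlock G (B i) ∧ 2 ≤ (B i).ncard) ∧
    (∀ C, IsHomBlock G C → 2 ≤ C.ncard → ∃ i, C = B i) ∧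
    (∀ i j : Fin d, i < j → ∀ u ∈ B i, ∀ v ∈ B j, u < v) ∧
    (∀ i, x i = ((B i).ncard : ℤ) - 2)

/-- `𝒢₀` (a set of ordered graphs of a common type, of common excess `m`) contains a line:
some subset `S ⊆ 𝒢₀` has `φ(S)` equal to a line in `Z^d(m)`. -/
def ContainsLine {n : ℕ} (𝒢₀ : Set (SimpleGraph (Fin n))) (m : ℕ) : Prop :=
  ∃ S ⊆ 𝒢₀, ∃ (d : ℕ) (j k : Fin d),
    {x : Fin d → ℤ | ∃ G ∈ S, phiAt G d x} = ZLine d m j k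

/-- `eraseSet G X` is `G − X`: delete all vertices of `X` and relabel order-preservingly. -/
noncomputable def eraseSet {n : ℕ} (G : SimpleGraph (Fin n)) (X : Finset (Fin n)) :
    SimpleGraph (Fin (n - X.card)) where
  Adj i j := G.Adj ((Xᶜ.orderIsoOfFin (by rw [Finset.card_compl, Fintype.card_fin]) i) : Fin n)
                   ((Xᶜ.orderIsoOfFin (by rw [Finset.card_compl, Fintype.card_fin]) j) : Fin n)
  symm := ⟨fun i j h => G.adj_symm h⟩
  loopless := ⟨fun i h => G.irrefl h⟩

/-- A semi-homogeneous block: a set `B` of consecutive vertices such that all vertices of `B`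
have the same neighbourhood outside `B`, and, for some `L ⊆ ℕ`, two vertices `x, y ∈ B` are
adjacent iff `|x − y| ∈ L`. -/
def IsSemiHomBlock {n : ℕ} (G : SimpleGraph (Fin n)) (B : Set (Fin n)) : Prop :=
  B.OrdConnected ∧
  (∀ x ∈ B, ∀ y ∈ B, G.neighborSet x \ B = G.neighborSet y \ B) ∧
  ∃ L : Set ℕ, ∀ x ∈ B, ∀ y ∈ B, (G.Adj x y ↔ ((x : ℤ) - (y : ℤ)).natAbs ∈ L)


/-- ℕ-level adjacency. -/
private def NA {n : ℕ} (G : SimpleGraph (Fin n)) (x y : ℕ) : Prop :=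
  ∃ (hx : x < n) (hy : y < n), G.Adj ⟨x, hx⟩ ⟨y, hy⟩

private lemma NA_iff {n : ℕ} (G : SimpleGraph (Fin n)) (u v : Fin n) :
    G.Adj u v ↔ NA G u v := by
  constructor
  · intro h; exact ⟨u.isLt, v.isLt, h⟩
  · rintro ⟨hx, hy, h⟩; exact h

private lemma NA_comm {n : ℕ} (G : SimpleGraph (Fin n)) (x y : ℕ) :
    NA G x y ↔ NA G y x := by
  constructor <;> rintro ⟨hx, hy, h⟩ <;> exact ⟨hy, hx, h.symm⟩

private lemma delMap_val {n : ℕ} (v : Fin n) (i : Fin (n - 1)) :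
    ((delMap v i : Fin n) : ℕ) = if (i : ℕ) < (v : ℕ) then (i : ℕ) else (i : ℕ) + 1 := by
  rw [delMap]; split_ifs <;> rfl

private lemma keyN {n : ℕ} {G : SimpleGraph (Fin n)} {a b : Fin n}
    (h : erase G a = erase G b) (i j : ℕ) (hi : i < n - 1) (hj : j < n - 1) :
    (NA G (if i < (a : ℕ) then i else i + 1) (if j < (a : ℕ) then j else j + 1) ↔
     NA G (if i < (b : ℕ) then i else i + 1) (if j < (b : ℕ) then j else j + 1)) := by
  have hk : G.Adj (delMap a ⟨i, hi⟩) (delMap a ⟨j, hj⟩) ↔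
      G.Adj (delMap b ⟨i, hi⟩) (delMap b ⟨j, hj⟩) :=
    iff_of_eq (congrArg (fun H : SimpleGraph (Fin (n - 1)) => H.Adj ⟨i, hi⟩ ⟨j, hj⟩) h)
  rw [NA_iff, NA_iff] at hk
  simpa only [delMap_val] using hk

private lemma R1N {n : ℕ} {G : SimpleGraph (Fin n)} {a b : Fin n} (hab : (a : ℕ) < b)
    (h : erase G a = erase G b) (u v : ℕ) (hun : u < n)
    (hu : u < a ∨ (b : ℕ) < u) (hv1 : (a : ℕ) < v) (hv2 : v ≤ b) :
    NA G u v ↔ NA G u (v - 1) := by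
  have hbn := b.isLt
  have hk := keyN h (if u < (a : ℕ) then u else u - 1) (v - 1)
    (by split_ifs <;> omega) (by omega)
  split_ifs at hk <;> first | omega | (convert hk using 3 <;> omega)

private lemma R2N {n : ℕ} {G : SimpleGraph (Fin n)} {a b : Fin n} (hab : (a : ℕ) < b)
    (h : erase G a = erase G b) (u v : ℕ)
    (hu1 : (a : ℕ) < u) (hu2 : u ≤ b) (hv1 : (a : ℕ) < v) (hv2 : v ≤ b) :
    NA G u v ↔ NA G (u - 1) (v - 1) := by
  have hbn := b.isLt
  have hk := keyN h (u - 1) (v - 1) (by omega) (by omega)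
  split_ifs at hk <;> first | omega | (convert hk using 3 <;> omega)

private lemma C1N {n : ℕ} {G : SimpleGraph (Fin n)} {a b : Fin n} (hab : (a : ℕ) < b)
    (h : erase G a = erase G b) (u v : ℕ) (hun : u < n)
    (hu : u < a ∨ (b : ℕ) < u) (hv1 : (a : ℕ) ≤ v) (hv2 : v ≤ b) :
    NA G u v ↔ NA G u a := by
  obtain ⟨k, rfl⟩ : ∃ k, v = a + k := ⟨v - a, by omega⟩
  clear hv1
  induction k with
  | zero => exact Iff.rfl
  | succ m ih =>
      have h1 := R1N hab h u ((a : ℕ) + (m + 1)) hun hu (by omega) (by omega)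
      rw [h1, show (a : ℕ) + (m + 1) - 1 = (a : ℕ) + m by omega]
      exact ih (by omega)


/-- **Lemma (three's a crowd).** If `a < b < c` and `G − a = G − b = G − c`, then the
interval `[a, c]` is homogeneous in `G` (all its vertices are pairwise `∼`-equivalent). -/
theorem threes_a_crowd (n : ℕ) (G : SimpleGraph (Fin n)) (a b c : Fin n)
    (hab : a < b) (hbc : b < c)
    (h₁ : erase G a = erase G b) (h₂ : erase G b = erase G c) :
    ∀ x ∈ Set.Icc a c, ∀ y ∈ Set.Icc a c, simRel G x y := by
  have hab' : (a : ℕ) < b := hab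
  have hbc' : (b : ℕ) < c := hbc
  have hcn := c.isLt
  -- vertices of [b,c] have equal neighbourhoods at a (Step A)
  have StepA : ∀ v : ℕ, (b : ℕ) ≤ v → v ≤ c → (NA G (a : ℕ) v ↔ NA G a b) :=
    fun v h1 h2 => C1N hbc' h₂ a v a.isLt (Or.inl hab') h1 h2
  -- cross pairs (Step B)
  have StepB : ∀ u v : ℕ, (a : ℕ) ≤ u → u ≤ b → (b : ℕ) < v → v ≤ c →
      (NA G u v ↔ NA G a b) := by
    intro u v h1 h2 h3 h4
    rw [NA_comm, C1N hab' h₁ v u (by omega) (Or.inr h3) h1 h2, NA_comm]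
    exact StepA v (by omega) h4
  -- f is constant (Step C)
  have StepC : ∀ u : ℕ, (a : ℕ) ≤ u → u < b → (NA G u (b : ℕ) ↔ NA G a b) := by
    intro u h1 h2
    rw [show (NA G u b ↔ NA G u c) from (C1N hbc' h₂ u c (by omega) (Or.inl h2)
      (by omega) (by omega)).symm]
    exact StepB u c h1 (by omega) hbc' (le_refl _)
  -- pairs inside [a,b] (Step D)
  have StepD : ∀ k u v : ℕ, (a : ℕ) ≤ u → u < v → v + k = b → (NA G u v ↔ NA G a b) := by
    intro k
    induction k with
    | zero =>
        intro u v h1 h2 h3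
        have : v = (b : ℕ) := by omega
        subst this
        exact StepC u h1 h2
    | succ m ih =>
        intro u v h1 h2 h3
        have hr := R2N hab' h₁ (u + 1) (v + 1) (by omega) (by omega) (by omega) (by omega)
        simp only [Nat.add_sub_cancel] at hr
        rw [← hr]
        exact ih (u + 1) (v + 1) (by omega) (by omega) (by omega)
  -- edges from b upward (Step E')
  have StepE' : ∀ v : ℕ, (b : ℕ) < v → v ≤ c → (NA G (b : ℕ) v ↔ NA G a b) := by
    intro v h1 h2
    rw [NA_comm, C1N hab' h₁ v b (by omega) (Or.inr h1) (by omega) (le_refl _), NA_comm]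
    exact StepA v (by omega) h2
  -- pairs inside [b,c] (Step E)
  have StepE : ∀ k u v : ℕ, (b : ℕ) + k = u → u < v → v ≤ c → (NA G u v ↔ NA G a b) := by
    intro k
    induction k with
    | zero =>
        intro u v h1 h2 h3
        have : u = (b : ℕ) := by omega
        subst this
        exact StepE' v h2 h3
    | succ m ih =>
        intro u v h1 h2 h3
        rw [R2N hbc' h₂ u v (by omega) (by omega) (by omega) h3]
        exact ih (u - 1) (v - 1) (by omega) (by omega) (by omega)
  -- all pairs inside [a,c] (P2)
  have P2 : ∀ u v : ℕ, (a : ℕ) ≤ u → u ≤ c → (a : ℕ) ≤ v → v ≤ c → u < v →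
      (NA G u v ↔ NA G a b) := by
    intro u v h1 h2 h3 h4 h5
    rcases le_or_gt v (b : ℕ) with hvb | hvb
    · exact StepD ((b : ℕ) - v) u v h1 h5 (by omega)
    rcases le_or_gt (b : ℕ) u with hub | hub
    · exact StepE (u - (b : ℕ)) u v (by omega) h5 h4
    · exact StepB u v h1 (by omega) hvb h4
  have P2' : ∀ u v : ℕ, (a : ℕ) ≤ u → u ≤ c → (a : ℕ) ≤ v → v ≤ c → u ≠ v →
      (NA G u v ↔ NA G a b) := by
    intro u v h1 h2 h3 h4 h5
    rcases lt_or_gt_of_ne h5 with h6 | h6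
    · exact P2 u v h1 h2 h3 h4 h6
    · rw [NA_comm]; exact P2 v u h3 h4 h1 h2 h6
  -- outside vertices (P1)
  have P1 : ∀ u z : ℕ, (a : ℕ) ≤ u → u ≤ c → z < n → (z < a ∨ (c : ℕ) < z) →
      (NA G u z ↔ NA G (a : ℕ) z) := by
    intro u z h1 h2 hz hzo
    rcases le_or_gt u (b : ℕ) with hub | hub
    · rw [NA_comm, C1N hab' h₁ z u hz (by omega) h1 hub, NA_comm]
    · rw [NA_comm, C1N hbc' h₂ z u hz (by omega) (by omega) h2,
        C1N hab' h₁ z b hz (by omega) (by omega) (le_refl _), NA_comm]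
  -- the master claim
  intro x hx y hy
  have hx1 : (a : ℕ) ≤ x := hx.1
  have hx2 : (x : ℕ) ≤ c := hx.2
  have hy1 : (a : ℕ) ≤ y := hy.1
  have hy2 : (y : ℕ) ≤ c := hy.2
  by_cases hxy : x = y
  · subst hxy; rfl
  have Q : ∀ z : Fin n, z ≠ x → z ≠ y → (G.Adj x z ↔ G.Adj y z) := by
    intro z hzx hzy
    rw [NA_iff, NA_iff]
    rcases le_or_gt (a : ℕ) (z : ℕ) with hza | hza
    · rcases le_or_gt (z : ℕ) (c : ℕ) with hzc | hzc
      · rw [P2' x z hx1 hx2 hza hzc (fun e => hzx (Fin.ext e.symm)),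
          P2' y z hy1 hy2 hza hzc (fun e => hzy (Fin.ext e.symm))]
      · rw [P1 x z hx1 hx2 z.isLt (Or.inr hzc), P1 y z hy1 hy2 z.isLt (Or.inr hzc)]
    · rw [P1 x z hx1 hx2 z.isLt (Or.inl hza), P1 y z hy1 hy2 z.isLt (Or.inl hza)]
  ext z
  simp only [simRel, Set.mem_diff, SimpleGraph.mem_neighborSet, Set.mem_singleton_iff]
  constructor
  · rintro ⟨hadj, hne⟩
    exact ⟨(Q z hadj.ne.symm hne).mp hadj, hadj.ne.symm⟩
  · rintro ⟨hadj, hne⟩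
    exact ⟨(Q z hne hadj.ne.symm).mpr hadj, hadj.ne.symm⟩

end OrderedGraphs
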